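/- Let m >= 1 and n >= 0 be integers, set t = (n+1)/m^2, let Omega = { (x,y) in R^2 : x*y < (n+1)/2, y - 6x < 2m, y - 4x > 2m, x > 0, y > 0 }, and let M1^(m)(n) be the number of lattice points (points of Z^2) in Omega whose y-coordinate is odd. Then M1^(m)(n) < (1/4)*(n+1)*( log( 3*(sqrt(1+2t)-1) / (2*(sqrt(1+3t)-1)) ) + 1/(sqrt(1+3t)+1) - 1/(sqrt(1+2t)+1) ) + 2.2*sqrt(n+1) + 1. -/

import Mathlib

lemma int_ediv_le_real (a b : ℤ) (hb : 0 < b) : ((a / b : ℤ) : ℝ) ≤ (a : ℝ) / (b : ℝ) := by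
  rw [le_div_iff₀ (by exact_mod_cast hb)]
  have h2 := Int.mul_ediv_add_emod a b
  have h3 := Int.emod_nonneg a hb.ne'
  have h1 : (a / b) * b ≤ a := by nlinarith [h2, h3]
  exact_mod_cast h1

lemma odd_card_le (l u : ℤ) :
    ((Finset.Icc l u).filter (fun y => Odd y)).card ≤ ((u - 1) / 2 + 1 - (l - 1) / 2).toNat := by
  have h : ((Finset.Icc l u).filter (fun y => Odd y)).card ≤
      (Finset.Icc ((l - 1) / 2) ((u - 1) / 2)).card := by
    apply Finset.card_le_card_of_injOn (fun y => (y - 1) / 2)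
    · intro y hy
      simp only [Finset.mem_coe, Finset.mem_filter, Finset.mem_Icc] at hy ⊢
      exact ⟨Int.ediv_le_ediv (by norm_num) (by omega), Int.ediv_le_ediv (by norm_num) (by omega)⟩
    · intro y1 h1 y2 h2 he
      simp only [Finset.mem_coe, Finset.mem_filter] at h1 h2
      obtain ⟨k1, hk1⟩ := h1.2
      obtain ⟨k2, hk2⟩ := h2.2
      simp only at he
      omega
  rwa [Int.card_Icc] at h

lemma telescope_aux (f g : ℤ → ℝ) : ∀ (k : ℕ) (a b : ℤ), b = a + k →
    (∀ x : ℤ, a < x → x ≤ b → f x ≤ g x - g (x - 1)) →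
    (∑ x ∈ Finset.Ioc a b, f x) ≤ g b - g a := by
  intro k
  induction k with
  | zero => intro a b hb h; subst hb; simp
  | succ j ih =>
    intro a b hb h
    have hb' : b = (a + j) + 1 := by omega
    subst hb'
    rw [show Finset.Ioc a (a + j + 1) = insert (a + j + 1) (Finset.Ioc a (a + j)) from by
      ext x; simp only [Finset.mem_Ioc, Finset.mem_insert]; omega,
      Finset.sum_insert (by simp only [Finset.mem_Ioc]; omega)]
    have h1 := h (a + j + 1) (by omega) le_rfl
    have h2 := ih a (a + j) rfl (fun x hx1 hx2 => h x hx1 (by omega))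
    have hg : g (a + j + 1 - 1) = g (a + j) := by norm_num
    rw [hg] at h1
    linarith

lemma telescope_Ioc (f g : ℤ → ℝ) (a b : ℤ) (hab : a ≤ b)
    (h : ∀ x : ℤ, a < x → x ≤ b → f x ≤ g x - g (x - 1)) :
    (∑ x ∈ Finset.Ioc a b, f x) ≤ g b - g a :=
  telescope_aux f g (b - a).toNat a b (by omega) h

lemma sum_Ioc_split (f : ℤ → ℝ) {a b c : ℤ} (h1 : a ≤ b) (h2 : b ≤ c) :
    (∑ x ∈ Finset.Ioc a c, f x) = (∑ x ∈ Finset.Ioc a b, f x) + ∑ x ∈ Finset.Ioc b c, f x := by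
  rw [← Finset.sum_union (Finset.disjoint_left.mpr (by
    intro x hx hx2
    simp only [Finset.mem_Ioc] at hx hx2
    omega)), Finset.Ioc_union_Ioc_eq_Ioc h1 h2]

set_option maxHeartbeats 2000000 in
set_option maxRecDepth 8000 in
/-- Let `m ≥ 1` and `n ≥ 0` be integers, set `t = (n+1)/m²`, let
`Ω = {(x,y) ∈ ℝ² : xy < (n+1)/2, y - 6x < 2m, y - 4x > 2m, x > 0, y > 0}`, and let
`M₁^(m)(n)` be the number of lattice points (points of `ℤ²`) in `Ω` whose `y`-coordinate
is odd.  Then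
`M₁^(m)(n) < (1/4)(n+1)(log(3(√(1+2t)-1)/(2(√(1+3t)-1))) + 1/(√(1+3t)+1) - 1/(√(1+2t)+1))
+ 2.2√(n+1) + 1`. -/
theorem stmt7 (m n : ℕ) (hm : 1 ≤ m) (t : ℝ) (ht : t = ((n : ℝ) + 1) / (m : ℝ) ^ 2)
    (Ω : Set (ℝ × ℝ))
    (hΩ : Ω = {P : ℝ × ℝ | P.1 * P.2 < ((n : ℝ) + 1) / 2 ∧ P.2 - 6 * P.1 < 2 * (m : ℝ) ∧
      P.2 - 4 * P.1 > 2 * (m : ℝ) ∧ P.1 > 0 ∧ P.2 > 0})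
    (M1 : ℕ) (hM1 : M1 = Set.ncard {p : ℤ × ℤ | ((p.1 : ℝ), (p.2 : ℝ)) ∈ Ω ∧ Odd p.2}) :
    (M1 : ℝ) < (1 / 4) * ((n : ℝ) + 1) *
        (Real.log (3 * (Real.sqrt (1 + 2 * t) - 1) / (2 * (Real.sqrt (1 + 3 * t) - 1)))
          + 1 / (Real.sqrt (1 + 3 * t) + 1) - 1 / (Real.sqrt (1 + 2 * t) + 1))
      + 2.2 * Real.sqrt ((n : ℝ) + 1) + 1 := by
  have hn1 : (0:ℝ) < (n:ℝ) + 1 := by positivity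
  have hm0 : (0:ℝ) < (m:ℝ) := by exact_mod_cast hm
  have ht0 : 0 < t := by rw [ht]; positivity
  have hmt : (m:ℝ)^2 * t = (n:ℝ) + 1 := by rw [ht]; field_simp
  set s : ℝ := Real.sqrt ((n:ℝ) + 1) with hs
  have hs2 : s^2 = (n:ℝ) + 1 := Real.sq_sqrt (by linarith)
  have hs1 : 1 ≤ s := by
    rw [hs, show (1:ℝ) = Real.sqrt 1 from (Real.sqrt_one).symm]
    exact Real.sqrt_le_sqrt (by norm_num)
  set A := Real.sqrt (1 + 2*t) with hA
  set B := Real.sqrt (1 + 3*t) with hB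
  have hA2 : A^2 = 1 + 2*t := Real.sq_sqrt (by linarith)
  have hB2 : B^2 = 1 + 3*t := Real.sq_sqrt (by linarith)
  have hA0 : 0 ≤ A := Real.sqrt_nonneg _
  have hB0 : 0 ≤ B := Real.sqrt_nonneg _
  have hA1 : 1 < A := by nlinarith
  have hB1 : 1 < B := by nlinarith
  have hAB : A < B := by nlinarith
  set x1 : ℝ := (m:ℝ) * (B - 1) / 6 with hx1def
  set x2 : ℝ := (m:ℝ) * (A - 1) / 4 with hx2def
  have hx1pos : 0 < x1 := by
    have h : 0 < B - 1 := by linarith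
    rw [hx1def]; positivity
  have hx2pos : 0 < x2 := by
    have h : 0 < A - 1 := by linarith
    rw [hx2def]; positivity
  have key1 : 12 * x1^2 + 4 * m * x1 = (n:ℝ) + 1 := by
    rw [hx1def]; linear_combination (m:ℝ)^2/3 * hB2 + hmt
  have key2 : 8 * x2^2 + 4 * m * x2 = (n:ℝ) + 1 := by
    rw [hx2def]; linear_combination (m:ℝ)^2/2 * hA2 + hmt
  have keyE : 3 * x1^2 - 2 * x2^2 - m * (x2 - x1) = 0 := by
    rw [hx1def, hx2def]; linear_combination (m:ℝ)^2/12 * hB2 - (m:ℝ)^2/8 * hA2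
  have hx12 : x1 < x2 := by
    have hP : (0:ℝ) < (A+1)*(B+1) := by nlinarith
    have hd : (3*(A-1) - 2*(B-1)) * ((A+1)*(B+1)) = 6*t*(B-A) := by
      linear_combination (3*B+3) * hA2 - (2*A+2) * hB2
    have hpos : (0:ℝ) < 6*t*(B-A) := by
      have : (0:ℝ) < B - A := by linarith
      positivity
    have hfac : 0 < 3*(A-1) - 2*(B-1) := by
      by_contra hc
      push_neg at hc
      linarith [hd, hpos, mul_nonpos_of_nonpos_of_nonneg hc hP.le]
    rw [hx1def, hx2def]
    rw [div_lt_div_iff₀ (by norm_num) (by norm_num)]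
    nlinarith [mul_pos hm0 hfac]
  have hx1s : x1 ≤ s / 3 := by nlinarith
  have hx2s : x2 ≤ s / 2 := by nlinarith
  -- integer cutoffs
  set X1 : ℤ := ⌊x1⌋ with hX1def
  set X2 : ℤ := ⌈x2⌉ - 1 with hX2def
  have hX1le : (X1:ℝ) ≤ x1 := Int.floor_le x1
  have hX1lt : x1 < (X1:ℝ) + 1 := Int.lt_floor_add_one x1
  have hX10 : 0 ≤ X1 := by
    rw [hX1def]; exact Int.le_floor.mpr (by exact_mod_cast hx1pos.le)
  have hX2lt : (X2:ℝ) < x2 := by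
    rw [hX2def]; push_cast
    have := Int.ceil_lt_add_one x2
    linarith
  have hX12 : X1 ≤ X2 := by
    have : X1 < ⌈x2⌉ := Int.lt_ceil.mpr (by linarith)
    omega
  -- the column finsets
  obtain ⟨K, hKdef⟩ : ∃ f : ℤ → Finset ℤ, f = fun x =>
      (Finset.Icc (4*x + 2*(m:ℤ) + 1) (min (6*x + 2*(m:ℤ) - 1) ((n:ℤ) / (2*x)))).filter
        (fun y => Odd y) := ⟨_, rfl⟩
  -- subset step
  have hsub : {p : ℤ × ℤ | ((p.1 : ℝ), (p.2 : ℝ)) ∈ Ω ∧ Odd p.2} ⊆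
      ↑((Finset.Ioc 0 X2).biUnion (fun x => (K x).image (fun y => (x, y)))) := by
    rintro ⟨px, py⟩ ⟨hmem, hodd⟩
    rw [hΩ] at hmem
    obtain ⟨hc1, hc2, hc3, hc4, hc5⟩ := hmem
    simp only at hc1 hc2 hc3 hc4 hc5
    have hpx0 : 0 < px := by exact_mod_cast hc4
    have hpxr : (1:ℝ) ≤ (px:ℝ) := by exact_mod_cast hpx0
    have hlow : 4*px + 2*(m:ℤ) + 1 ≤ py := by
      have : (4*px + 2*(m:ℤ) : ℝ) < py := by push_cast; linarith
      exact_mod_cast Int.add_one_le_iff.mpr (by exact_mod_cast this)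
    have hup1 : py ≤ 6*px + 2*(m:ℤ) - 1 := by
      have : (py:ℝ) < (6*px + 2*(m:ℤ) : ℝ) := by push_cast; linarith
      have h2 : py < 6*px + 2*(m:ℤ) := by exact_mod_cast this
      omega
    have hup2 : py ≤ (n:ℤ) / (2*px) := by
      rw [Int.le_ediv_iff_mul_le (by positivity)]
      have : (py * (2*px) : ℝ) < (n:ℝ) + 1 := by push_cast; nlinarith
      have h2 : py * (2*px) < (n:ℤ) + 1 := by exact_mod_cast this
      omega
    have hq : 8*(px:ℝ)^2 + 4*m*px < (n:ℝ) + 1 := by nlinarith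
    have hpxx2 : (px:ℝ) < x2 := by
      by_contra hc
      push_neg at hc
      nlinarith [mul_nonneg (sub_nonneg.mpr hc) hm0.le,
        mul_nonneg (sub_nonneg.mpr hc) (by linarith : (0:ℝ) ≤ (px:ℝ) + x2)]
    have hpxX2 : px ≤ X2 := by
      have : px < ⌈x2⌉ := Int.lt_ceil.mpr hpxx2
      omega
    simp only [Finset.coe_biUnion, Set.mem_iUnion, Finset.mem_coe, Finset.mem_biUnion]
    refine ⟨px, ?_, ?_⟩
    · exact Finset.mem_Ioc.mpr ⟨hpx0, hpxX2⟩
    · rw [Finset.mem_image]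
      refine ⟨py, ?_, rfl⟩
      rw [hKdef]
      simp only [Finset.mem_filter, Finset.mem_Icc, le_min_iff]
      exact ⟨⟨hlow, hup1, hup2⟩, hodd⟩
  -- counting reduction
  have hcount : (M1:ℝ) ≤ ∑ x ∈ Finset.Ioc 0 X2, ((K x).card : ℝ) := by
    have h1 : M1 ≤ ((Finset.Ioc 0 X2).biUnion (fun x => (K x).image (fun y => (x, y)))).card := by
      rw [hM1, ← Set.ncard_coe_finset]
      exact Set.ncard_le_ncard hsub (Finset.finite_toSet _)
    have h2 := Finset.card_biUnion_le (s := Finset.Ioc 0 X2)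
      (t := fun x => (K x).image (fun y => (x, y)))
    have h3 : ∑ x ∈ Finset.Ioc 0 X2, ((K x).image (fun y => (x, y))).card ≤
        ∑ x ∈ Finset.Ioc 0 X2, (K x).card :=
      Finset.sum_le_sum (fun x _ => Finset.card_image_le)
    have h4 : M1 ≤ ∑ x ∈ Finset.Ioc 0 X2, (K x).card := le_trans h1 (le_trans h2 h3)
    calc (M1:ℝ) ≤ ((∑ x ∈ Finset.Ioc 0 X2, (K x).card : ℕ) : ℝ) := by exact_mod_cast h4
      _ = ∑ x ∈ Finset.Ioc 0 X2, ((K x).card : ℝ) := by push_cast; rfl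
  -- column bound 1
  have col1 : ∀ x : ℤ, 0 < x → ((K x).card : ℝ) ≤ (x:ℝ) := by
    intro x hx
    have hsub2 : K x ⊆ (Finset.Icc (4*x + 2*(m:ℤ) + 1) (6*x + 2*(m:ℤ) - 1)).filter
        (fun y => Odd y) := by
      rw [hKdef]
      exact Finset.filter_subset_filter _ (Finset.Icc_subset_Icc_right (min_le_left _ _))
    have h1 : (K x).card ≤ ((6*x + 2*(m:ℤ) - 1 - 1)/2 + 1 - (4*x + 2*(m:ℤ) + 1 - 1)/2).toNat :=
      le_trans (Finset.card_le_card hsub2) (odd_card_le _ _)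
    have h2 : ((6*x + 2*(m:ℤ) - 1 - 1)/2 + 1 - (4*x + 2*(m:ℤ) + 1 - 1)/2) = x := by omega
    rw [h2] at h1
    have h3 : ((x.toNat : ℕ) : ℝ) = (x:ℝ) := by
      rw [show ((x.toNat : ℕ) : ℝ) = ((x.toNat : ℤ) : ℝ) from by push_cast; rfl,
        Int.toNat_of_nonneg hx.le]
    calc ((K x).card : ℝ) ≤ ((x.toNat : ℕ) : ℝ) := by exact_mod_cast h1
      _ = (x:ℝ) := h3
  -- column bound 2
  have col2 : ∀ x : ℤ, 0 < x → (x:ℝ) ≤ x2 →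
      ((K x).card : ℝ) ≤ ((n:ℝ)+1)/(4*x) - 2*x - (m:ℝ) + 1/2 := by
    intro x hx hxx2
    have hxr : (0:ℝ) < (x:ℝ) := by exact_mod_cast hx
    have hsub2 : K x ⊆ (Finset.Icc (4*x + 2*(m:ℤ) + 1) ((n:ℤ) / (2*x))).filter
        (fun y => Odd y) := by
      rw [hKdef]
      exact Finset.filter_subset_filter _ (Finset.Icc_subset_Icc_right (min_le_right _ _))
    have h1 : (K x).card ≤ (((n:ℤ)/(2*x) - 1)/2 + 1 - (2*x + (m:ℤ))).toNat := by
      refine le_trans (Finset.card_le_card hsub2) (le_trans (odd_card_le _ _) (le_of_eq ?_))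
      congr 1
      omega
    -- RHS nonnegativity
    have h8 : 8*(x:ℝ)^2 + 4*(m:ℝ)*(x:ℝ) ≤ (n:ℝ)+1 := by
      have hprod : (0:ℝ) ≤ (x2 - x)*(8*(x2 + x) + 4*(m:ℝ)) :=
        mul_nonneg (by linarith) (by nlinarith)
      have hexp : (x2 - (x:ℝ))*(8*(x2 + x) + 4*(m:ℝ))
          = 8*x2^2 + 4*(m:ℝ)*x2 - (8*(x:ℝ)^2 + 4*(m:ℝ)*(x:ℝ)) := by ring
      linarith [key2]
    have hdiv : 2*(x:ℝ) + (m:ℝ) ≤ ((n:ℝ)+1)/(4*(x:ℝ)) := by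
      rw [le_div_iff₀ (by positivity)]
      have hexp : (2*(x:ℝ) + (m:ℝ))*(4*(x:ℝ)) = 8*(x:ℝ)^2 + 4*(m:ℝ)*(x:ℝ) := by ring
      linarith
    have hnn : (0:ℝ) ≤ ((n:ℝ)+1)/(4*x) - 2*x - (m:ℝ) + 1/2 := by linarith
    rcases le_or_gt ((((n:ℤ)/(2*x) - 1)/2 + 1 - (2*x + (m:ℤ)))) 0 with hv0 | hv0
    · have : (((n:ℤ)/(2*x) - 1)/2 + 1 - (2*x + (m:ℤ))).toNat = 0 := Int.toNat_of_nonpos hv0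
      rw [this] at h1
      have : (K x).card = 0 := Nat.le_zero.mp h1
      rw [this]
      simpa using hnn
    · have hq1 : (((n:ℤ)/(2*x) : ℤ):ℝ) ≤ (n:ℝ)/(2*(x:ℝ)) := by
        have := int_ediv_le_real (n:ℤ) (2*x) (by positivity)
        push_cast at this ⊢
        linarith
      have hq2 : ((((n:ℤ)/(2*x) - 1)/2 : ℤ):ℝ) ≤ ((((n:ℤ)/(2*x):ℤ):ℝ) - 1)/2 := by
        have := int_ediv_le_real ((n:ℤ)/(2*x) - 1) 2 (by norm_num)
        push_cast at this ⊢
        linarith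
      have hcast : (((((n:ℤ)/(2*x) - 1)/2 + 1 - (2*x + (m:ℤ))).toNat : ℕ) : ℝ)
          = (((((n:ℤ)/(2*x) - 1)/2 + 1 - (2*x + (m:ℤ))) : ℤ) : ℝ) := by
        rw [show (((((n:ℤ)/(2*x) - 1)/2 + 1 - (2*x + (m:ℤ))).toNat : ℕ) : ℝ)
            = ((((((n:ℤ)/(2*x) - 1)/2 + 1 - (2*x + (m:ℤ))).toNat : ℤ)) : ℝ) from by push_cast; rfl,
          Int.toNat_of_nonneg hv0.le]
      have h5 : ((K x).card : ℝ) ≤ (((((n:ℤ)/(2*x) - 1)/2 + 1 - (2*x + (m:ℤ))) : ℤ) : ℝ) := by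
        rw [← hcast]; exact_mod_cast h1
      have hnx : (n:ℝ)/(2*(x:ℝ)) ≤ ((n:ℝ)+1)/(2*(x:ℝ)) := by gcongr; linarith
      push_cast at h5
      have : ((n:ℝ)+1)/(2*(x:ℝ))/2 = ((n:ℝ)+1)/(4*(x:ℝ)) := by ring
      linarith
  -- the antiderivative
  obtain ⟨HH, hHdef⟩ : ∃ f : ℝ → ℝ,
      f = fun z => ((n:ℝ)+1)/2 * Real.log z - 2*z^2 - 2*(m:ℝ)*z := ⟨_, rfl⟩
  have hHmono : ∀ a b : ℝ, x1 ≤ a → a ≤ b → b ≤ x2 → HH a ≤ HH b := by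
    intro a b hxa hab hbx2
    have ha0 : 0 < a := lt_of_lt_of_le hx1pos hxa
    have hb0 : 0 < b := lt_of_lt_of_le ha0 hab
    have hlog : (b - a)/b ≤ Real.log b - Real.log a := by
      have h5 := Real.log_le_sub_one_of_pos (show (0:ℝ) < a/b by positivity)
      rw [Real.log_div ha0.ne' hb0.ne'] at h5
      have h6 : a/b - 1 = -((b-a)/b) := by field_simp; ring
      rw [h6] at h5
      linarith
    have h8 : 8*b^2 + 4*(m:ℝ)*b ≤ (n:ℝ)+1 := by
      have hprod : (0:ℝ) ≤ (x2 - b)*(8*(x2 + b) + 4*(m:ℝ)) :=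
        mul_nonneg (by linarith) (by nlinarith)
      have hexp : (x2 - b)*(8*(x2 + b) + 4*(m:ℝ))
          = 8*x2^2 + 4*(m:ℝ)*x2 - (8*b^2 + 4*(m:ℝ)*b) := by ring
      linarith [key2]
    have hdiv : 4*b + 2*(m:ℝ) ≤ ((n:ℝ)+1)/(2*b) := by
      rw [le_div_iff₀ (by positivity)]
      have hexp : (4*b + 2*(m:ℝ))*(2*b) = 8*b^2 + 4*(m:ℝ)*b := by ring
      linarith
    have h9 : (b-a) * (4*b + 2*(m:ℝ)) ≤ (b-a) * (((n:ℝ)+1)/(2*b)) :=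
      mul_le_mul_of_nonneg_left hdiv (by linarith)
    have h10 : ((n:ℝ)+1)/2 * ((b-a)/b) ≤ ((n:ℝ)+1)/2 * (Real.log b - Real.log a) :=
      mul_le_mul_of_nonneg_left hlog (by linarith)
    have hstep : ((n:ℝ)+1)/2 * ((b-a)/b) = (b-a) * (((n:ℝ)+1)/(2*b)) := by
      field_simp
    have hE1 : ((n:ℝ)+1)/2 * (Real.log b - Real.log a)
        = ((n:ℝ)+1)/2 * Real.log b - ((n:ℝ)+1)/2 * Real.log a := by ring
    have hE2 : (b-a) * (4*b + 2*(m:ℝ)) = 4*b^2 + 2*(m:ℝ)*b - 4*(a*b) - 2*((m:ℝ)*a) := by ring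
    have hE3 : (0:ℝ) ≤ b^2 - 2*(a*b) + a^2 := by
      linarith only [sq_nonneg (b-a), (by ring : (b-a)^2 = b^2 - 2*(a*b) + a^2)]
    simp only [hHdef]
    linarith only [h9, h10, hstep, hE1, hE2, hE3]
  -- target reformulation
  have hm0' : (m:ℝ) ≠ 0 := hm0.ne'
  have hB1' : B - 1 ≠ 0 := by linarith
  have hlogeq : Real.log (3*(A-1)/(2*(B-1))) = Real.log x2 - Real.log x1 := by
    rw [show 3*(A-1)/(2*(B-1)) = x2/x1 from by
      rw [hx1def, hx2def]; field_simp; ring]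
    exact Real.log_div hx2pos.ne' hx1pos.ne'
  have e1 : 1/(B+1) = 2*(m:ℝ)*x1/((n:ℝ)+1) := by
    rw [div_eq_div_iff (by positivity : (B+1:ℝ) ≠ 0) hn1.ne', hx1def]
    linear_combination -(m:ℝ)^2/3 * hB2 - hmt
  have e2 : 1/(A+1) = 2*(m:ℝ)*x2/((n:ℝ)+1) := by
    rw [div_eq_div_iff (by positivity : (A+1:ℝ) ≠ 0) hn1.ne', hx2def]
    linear_combination -(m:ℝ)^2/2 * hA2 - hmt
  have hTgt : (1/4) * ((n:ℝ)+1) * (Real.log (3*(A-1)/(2*(B-1))) + 1/(B+1) - 1/(A+1))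
      = x1^2/2 + (HH x2 - HH x1)/2 := by
    rw [hlogeq, e1, e2]
    simp only [hHdef]
    have c1 : 2*(m:ℝ)*x1/((n:ℝ)+1) * ((n:ℝ)+1) = 2*(m:ℝ)*x1 := div_mul_cancel₀ _ hn1.ne'
    have c2 : 2*(m:ℝ)*x2/((n:ℝ)+1) * ((n:ℝ)+1) = 2*(m:ℝ)*x2 := div_mul_cancel₀ _ hn1.ne'
    linear_combination (1/4)*c1 - (1/4)*c2 - (1/2)*keyE
  rw [hTgt]
  have hHx12 : HH x1 ≤ HH x2 := hHmono x1 x2 le_rfl hx12.le le_rfl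
  -- split the sum
  rcases eq_or_lt_of_le hX12 with hEq | hLt
  · -- X1 = X2 : only the triangle part
    have tele1 : ∑ x ∈ Finset.Ioc 0 X2, ((K x).card:ℝ) ≤ (X1:ℝ)*((X1:ℝ)+1)/2 := by
      rw [← hEq]
      have := telescope_Ioc (fun x => ((K x).card:ℝ)) (fun k => (k:ℝ)*((k:ℝ)+1)/2) 0 X1 hX10
        (fun x hx0 hxX1 => by
          have h := col1 x hx0
          push_cast
          have : ((x:ℝ))*((x:ℝ)+1)/2 - ((x:ℝ)-1)*(((x:ℝ)-1)+1)/2 = (x:ℝ) := by ring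
          rw [this]
          exact h)
      simpa using this
    have hX1sq : (X1:ℝ)*((X1:ℝ)+1)/2 ≤ x1*(x1+1)/2 := by
      have h0 : (0:ℝ) ≤ (X1:ℝ) := by exact_mod_cast hX10
      have hprod : (0:ℝ) ≤ (x1 - X1)*(x1 + X1 + 1) :=
        mul_nonneg (by linarith) (by linarith)
      have hexp : (x1 - (X1:ℝ))*(x1 + (X1:ℝ) + 1)
          = x1*(x1+1) - (X1:ℝ)*((X1:ℝ)+1) := by ring
      linarith
    have hE : x1*(x1+1)/2 = x1^2/2 + x1/2 := by ring
    have hchain : (M1:ℝ) ≤ x1*(x1+1)/2 := le_trans hcount (le_trans tele1 hX1sq)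
    have hgoal : (M1:ℝ) < x1^2/2 + (HH x2 - HH x1)/2 + 2.2*s + 1 := by
      linarith only [hchain, hHx12, hx1s, hs1, hE]
    exact hgoal
  · -- X1 < X2
    have hsplit1 := sum_Ioc_split (fun x : ℤ => ((K x).card:ℝ)) hX10 hX12
    have hsplit2 := sum_Ioc_split (fun x : ℤ => ((K x).card:ℝ))
      (by omega : X1 ≤ X1 + 1) (by omega : X1 + 1 ≤ X2)
    have hsingle : Finset.Ioc X1 (X1+1) = {X1+1} := by
      ext y; simp only [Finset.mem_Ioc, Finset.mem_singleton]; omega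
    have tele1 : ∑ x ∈ Finset.Ioc 0 X1, ((K x).card:ℝ) ≤ (X1:ℝ)*((X1:ℝ)+1)/2 := by
      have := telescope_Ioc (fun x => ((K x).card:ℝ)) (fun k => (k:ℝ)*((k:ℝ)+1)/2) 0 X1 hX10
        (fun x hx0 hxX1 => by
          have h := col1 x hx0
          push_cast
          have : ((x:ℝ))*((x:ℝ)+1)/2 - ((x:ℝ)-1)*(((x:ℝ)-1)+1)/2 = (x:ℝ) := by ring
          rw [this]
          exact h)
      simpa using this
    have hfirst : ((K (X1+1)).card:ℝ) ≤ x1 + 1 := by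
      have h := col1 (X1+1) (by omega)
      push_cast at h
      linarith
    have tele3 : ∑ x ∈ Finset.Ioc (X1+1) X2, ((K x).card:ℝ)
        ≤ (HH (X2:ℝ)/2 + (X2:ℝ)/2) - (HH ((X1:ℝ)+1)/2 + ((X1:ℝ)+1)/2) := by
      have := telescope_Ioc (fun x => ((K x).card:ℝ)) (fun k => HH (k:ℝ)/2 + (k:ℝ)/2)
        (X1+1) X2 hLt
        (fun x hxa hxb => by
          have hx2int : (2:ℤ) ≤ x := by omega
          have hxr2 : (2:ℝ) ≤ (x:ℝ) := by exact_mod_cast hx2int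
          have hxx2 : (x:ℝ) ≤ x2 := by
            have : (x:ℝ) ≤ (X2:ℝ) := by exact_mod_cast hxb
            linarith
          have hcol := col2 x (by omega) hxx2
          have hlog : 1/(x:ℝ) ≤ Real.log (x:ℝ) - Real.log ((x:ℝ)-1) := by
            have h5 := Real.log_le_sub_one_of_pos
              (show (0:ℝ) < ((x:ℝ)-1)/(x:ℝ) from div_pos (by linarith) (by linarith))
            rw [Real.log_div (by linarith) (by linarith)] at h5
            have h6 : ((x:ℝ)-1)/(x:ℝ) - 1 = -(1/(x:ℝ)) := by
              field_simp
              ring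
            rw [h6] at h5
            linarith
          have h10 : ((n:ℝ)+1)/2 * (1/(x:ℝ)) ≤
              ((n:ℝ)+1)/2 * (Real.log (x:ℝ) - Real.log ((x:ℝ)-1)) :=
            mul_le_mul_of_nonneg_left hlog (by linarith)
          have hstep : ((n:ℝ)+1)/2 * (1/(x:ℝ)) = ((n:ℝ)+1)/(2*(x:ℝ)) := by ring
          have hstep2 : ((n:ℝ)+1)/(2*(x:ℝ))/2 = ((n:ℝ)+1)/(4*(x:ℝ)) := by ring
          have hE4 : ((x:ℝ))^2 - ((x:ℝ)-1)^2 = 2*(x:ℝ) - 1 := by ring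
          have hE5 : ((n:ℝ)+1)/2 * (Real.log (x:ℝ) - Real.log ((x:ℝ)-1))
              = ((n:ℝ)+1)/2 * Real.log (x:ℝ) - ((n:ℝ)+1)/2 * Real.log ((x:ℝ)-1) := by ring
          simp only [hHdef]
          push_cast
          linarith only [hcol, h10, hstep, hstep2, hE4, hE5])
      simpa using this
    have hHa : HH x1 ≤ HH ((X1:ℝ)+1) := by
      apply hHmono x1 ((X1:ℝ)+1) le_rfl (by linarith)
      have h1 : ((X1:ℝ)+1) ≤ (X2:ℝ) := by exact_mod_cast hLt
      linarith
    have hHb : HH (X2:ℝ) ≤ HH x2 := by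
      apply hHmono (X2:ℝ) x2 ?_ hX2lt.le le_rfl
      have h1 : ((X1:ℝ)+1) ≤ (X2:ℝ) := by exact_mod_cast hLt
      linarith
    have hX1sq : (X1:ℝ)*((X1:ℝ)+1)/2 ≤ x1*(x1+1)/2 := by
      have h0 : (0:ℝ) ≤ (X1:ℝ) := by exact_mod_cast hX10
      have hprod : (0:ℝ) ≤ (x1 - X1)*(x1 + X1 + 1) :=
        mul_nonneg (by linarith) (by linarith)
      have hexp : (x1 - (X1:ℝ))*(x1 + (X1:ℝ) + 1)
          = x1*(x1+1) - (X1:ℝ)*((X1:ℝ)+1) := by ring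
      linarith
    have hlen : (X2:ℝ) - ((X1:ℝ)+1) ≤ x2 - x1 := by linarith
    have htot : (M1:ℝ) ≤ x1*(x1+1)/2 + (x1+1) + (HH x2 - HH x1)/2 + (x2-x1)/2 := by
      have e3 : ∑ x ∈ Finset.Ioc X1 (X1+1), ((K x).card:ℝ) = ((K (X1+1)).card:ℝ) := by
        rw [hsingle, Finset.sum_singleton]
      calc (M1:ℝ) ≤ ∑ x ∈ Finset.Ioc 0 X2, ((K x).card : ℝ) := hcount
        _ = ∑ x ∈ Finset.Ioc 0 X1, ((K x).card : ℝ) + (((K (X1+1)).card:ℝ)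
            + ∑ x ∈ Finset.Ioc (X1+1) X2, ((K x).card : ℝ)) := by
          rw [hsplit1, hsplit2, e3]
        _ ≤ x1*(x1+1)/2 + ((x1+1) + ((HH (X2:ℝ)/2 + (X2:ℝ)/2)
            - (HH ((X1:ℝ)+1)/2 + ((X1:ℝ)+1)/2))) := by
          exact add_le_add (le_trans tele1 hX1sq) (add_le_add hfirst tele3)
        _ ≤ x1*(x1+1)/2 + (x1+1) + (HH x2 - HH x1)/2 + (x2-x1)/2 := by linarith
    have hE : x1*(x1+1)/2 = x1^2/2 + x1/2 := by ring
    linarith only [htot, hx1s, hx2s, hs1, hE, hHx12]
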